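/- Let ρ = |0⟩⟨0|_A ⊗ (1/2^b) I_B on a+b qubits with partition into C and D where |D| = d > a, and let H_D be a γ-gapped Hamiltonian on D. If β > (d ln 2 + ln 3)/γ, then there is no unitary U such that tr_C(U ρ U†) equals the Gibbs state G_β(H_D). -/

import Mathlib

open Matrix BigOperators Kronecker
open scoped Classical ComplexOrder

noncomputable section

def ptraceFst {C D : Type*} [Fintype C] (σ : Matrix (C × D) (C × D) ℂ) :
    Matrix D D ℂ := Matrix.of fun y y' => ∑ j : C, σ (j, y) (j, y')

def ptraceSnd {C D : Type*} [Fintype D] (σ : Matrix (C × D) (C × D) ℂ) :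
    Matrix C C ℂ := Matrix.of fun x x' => ∑ j : D, σ (x, j) (x', j)

def traceNorm {n : Type*} [Fintype n] [DecidableEq n] (M : Matrix n n ℂ) : ℝ :=
  ((Matrix.isHermitian_conjTranspose_mul_self M).eigenvectorUnitary.1 *
    diagonal (((↑) : ℝ → ℂ) ∘ (√·) ∘ (Matrix.isHermitian_conjTranspose_mul_self M).eigenvalues) *
    (star (Matrix.isHermitian_conjTranspose_mul_self M).eigenvectorUnitary : Matrix n n ℂ)).trace.re

def traceDist {n : Type*} [Fintype n] [DecidableEq n] (σ σ' : Matrix n n ℂ) : ℝ :=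
  traceNorm (σ - σ') / 2

def IsDensity {n : Type*} [Fintype n] (M : Matrix n n ℂ) : Prop :=
  M.PosSemidef ∧ M.trace = 1

def IsPure {n : Type*} [Fintype n] (σ : Matrix n n ℂ) : Prop :=
  ∃ ψ : n → ℂ, (∑ i, Complex.normSq (ψ i)) = 1 ∧ σ = Matrix.vecMulVec ψ (star ψ)

def inputState (a b : ℕ) :
    Matrix (Fin (2^a) × Fin (2^b)) (Fin (2^a) × Fin (2^b)) ℂ :=
  (Matrix.single 0 0 1) ⊗ₖ (((2:ℂ)^b)⁻¹ • (1 : Matrix (Fin (2^b)) (Fin (2^b)) ℂ))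

def measSub {C D : Type*} [Fintype C] [Fintype D] (σ : Matrix (C × D) (C × D) ℂ) (j : C) :
    Matrix D D ℂ := Matrix.of fun y y' => σ (j, y) (j, y')

def measProb {C D : Type*} [Fintype C] [Fintype D] (σ : Matrix (C × D) (C × D) ℂ) (j : C) : ℝ :=
  ((measSub σ j).trace).re

def gibbs {n : Type*} [Fintype n] [DecidableEq n] (β : ℝ) {H : Matrix n n ℂ}
    (hH : H.IsHermitian) : Matrix n n ℂ :=
  ((hH.cfc (fun x => Real.exp (-β * x))).trace)⁻¹ • hH.cfc (fun x => Real.exp (-β * x))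

def vNEntropy {n : Type*} [Fintype n] [DecidableEq n] (M : Matrix n n ℂ) : ℝ :=
  if h : M.IsHermitian then -∑ i, (h.eigenvalues i) * Real.logb 2 (h.eigenvalues i) else 0

def iterState (n : ℕ) (U : ℕ → Matrix (Fin 2 × Fin (2^n)) (Fin 2 × Fin (2^n)) ℂ) :
    ℕ → Matrix (Fin (2^n)) (Fin (2^n)) ℂ
  | 0 => ((2:ℂ)^n)⁻¹ • 1
  | k+1 => ptraceFst (U k * ((Matrix.single 0 0 1) ⊗ₖ iterState n U k) * (U k)ᴴ)

section aux
variable {n : Type*} [Fintype n] [DecidableEq n]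

lemma cfc_mulVec {H : Matrix n n ℂ} (hH : H.IsHermitian) (f : ℝ → ℝ) (j : n) :
    hH.cfc f *ᵥ ⇑(hH.eigenvectorBasis j)
      = (f (hH.eigenvalues j) : ℂ) • ⇑(hH.eigenvectorBasis j) := by
  have hsingle : (Pi.single j (RCLike.ofReal (K := ℂ) (f (hH.eigenvalues j))) : n → ℂ)
      = (f (hH.eigenvalues j) : ℂ) • (Pi.single j (1 : ℂ) : n → ℂ) := by
    ext k
    by_cases h : k = j
    · subst h; rw [Pi.single_eq_same]; simp
    · simp [Pi.single_eq_of_ne h]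
  rw [Matrix.IsHermitian.cfc, Unitary.conjStarAlgAut_apply, ← Matrix.mulVec_mulVec, ← Matrix.mulVec_mulVec,
    Matrix.IsHermitian.star_eigenvectorUnitary_mulVec, Matrix.diagonal_mulVec_single]
  simp only [Function.comp_apply, mul_one]
  rw [hsingle, Matrix.mulVec_smul, Matrix.IsHermitian.eigenvectorUnitary_mulVec]

lemma cfc_trace {H : Matrix n n ℂ} (hH : H.IsHermitian) (f : ℝ → ℝ) :
    (hH.cfc f).trace = ∑ i, (f (hH.eigenvalues i) : ℂ) := by
  rw [Matrix.IsHermitian.cfc, Unitary.conjStarAlgAut_apply, Matrix.trace_mul_cycle,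
    Unitary.coe_star_mul_self, Matrix.one_mul, Matrix.trace_diagonal]
  simp

lemma vdotv {H : Matrix n n ℂ} (hH : H.IsHermitian) (j : n) :
    star ⇑(hH.eigenvectorBasis j) ⬝ᵥ ⇑(hH.eigenvectorBasis j) = 1 := by
  have h := orthonormal_iff_ite.mp hH.eigenvectorBasis.orthonormal j j
  rw [if_pos rfl, EuclideanSpace.inner_eq_star_dotProduct, dotProduct_comm] at h
  exact h

end aux

lemma inputState_apply (a b : ℕ) (p q : Fin (2^a) × Fin (2^b)) :
    inputState a b p q
      = (if p.1 = 0 ∧ q.1 = 0 then 1 else 0) * (((2:ℂ)^b)⁻¹ * (if p.2 = q.2 then 1 else 0)) := by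
  cases p; cases q
  simp only [inputState, Matrix.kroneckerMap_apply, Matrix.single, Matrix.of_apply,
    Matrix.smul_apply, Matrix.one_apply, smul_eq_mul]
  simp [@eq_comm _ (0 : Fin (2^a))]

lemma inputState_mulVec (a b : ℕ) (x : Fin (2^a) × Fin (2^b) → ℂ) (p : Fin (2^a) × Fin (2^b)) :
    (inputState a b *ᵥ x) p = if p.1 = 0 then ((2:ℂ)^b)⁻¹ * x (0, p.2) else 0 := by
  obtain ⟨j, y⟩ := p
  simp only [Matrix.mulVec, dotProduct, inputState_apply]
  rw [Fintype.sum_prod_type]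
  by_cases h : j = 0
  · subst h
    simp [Finset.sum_ite_eq, mul_ite, ite_mul, mul_comm]
  · simp [h]

lemma inputState_psd_bound (a b : ℕ) :
    Matrix.PosSemidef (((2:ℂ)^b)⁻¹ •
        (1 : Matrix (Fin (2^a) × Fin (2^b)) (Fin (2^a) × Fin (2^b)) ℂ) - inputState a b) := by
  refine Matrix.PosSemidef.of_dotProduct_mulVec_nonneg ?_ ?_
  · ext ⟨j, y⟩ ⟨j', y'⟩
    simp only [Matrix.conjTranspose_apply, Matrix.sub_apply, Matrix.smul_apply, Matrix.one_apply,
      inputState_apply, star_sub, star_mul', smul_eq_mul]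
    by_cases h1 : j = j' <;> by_cases h2 : y = y' <;>
      by_cases h3 : j = 0 <;> by_cases h4 : j' = 0 <;>
      simp_all [Prod.ext_iff, eq_comm, and_comm]
  · intro x
    set c : ℂ := ((2:ℂ)^b)⁻¹ with hc
    have hA : ∑ p : Fin (2^a) × Fin (2^b), star (x p) * (c * x p)
        = ((((2:ℝ)^b)⁻¹ * ∑ j, ∑ y, Complex.normSq (x (j, y)) : ℝ) : ℂ) := by
      rw [Fintype.sum_prod_type]
      push_cast [Finset.mul_sum]
      refine Finset.sum_congr rfl fun j _ => Finset.sum_congr rfl fun y _ => ?_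
      rw [show star (x (j,y)) * (c * x (j,y)) = c * (x (j,y) * star (x (j,y))) by ring]
      simp [hc, Complex.star_def, Complex.mul_conj]
    have hB : ∑ p : Fin (2^a) × Fin (2^b),
          star (x p) * (if p.1 = 0 then c * x (0, p.2) else 0)
        = ((((2:ℝ)^b)⁻¹ * ∑ y, Complex.normSq (x (0, y)) : ℝ) : ℂ) := by
      rw [Fintype.sum_prod_type, Finset.sum_eq_single 0]
      · push_cast [Finset.mul_sum]
        refine Finset.sum_congr rfl fun y _ => ?_
        rw [if_pos rfl, show star (x (0,y)) * (c * x (0, y)) = c * (x (0,y) * star (x (0,y))) by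
          ring]
        simp [hc, Complex.star_def, Complex.mul_conj]
      · intro j _ hj
        simp [hj]
      · simp
    have key : star x ⬝ᵥ ((c • 1 - inputState a b) *ᵥ x)
        = ((((2:ℝ)^b)⁻¹ * ((∑ j, ∑ y, Complex.normSq (x (j, y)))
            - ∑ y, Complex.normSq (x (0, y))) : ℝ) : ℂ) := by
      rw [Matrix.sub_mulVec, Matrix.smul_mulVec, Matrix.one_mulVec, dotProduct_sub]
      simp only [dotProduct, Pi.star_apply, Pi.smul_apply, smul_eq_mul, inputState_mulVec]
      rw [show (∑ p : Fin (2^a) × Fin (2^b), star (x p) * (c * x p)) = _ from hA, hB]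
      push_cast
      ring
    rw [key, Complex.zero_le_real]
    have h1 : ∑ y, Complex.normSq (x (0, y)) ≤ ∑ j, ∑ y, Complex.normSq (x (j, y)) :=
      Finset.single_le_sum (f := fun j => ∑ y, Complex.normSq (x (j, y)))
        (fun j _ => Finset.sum_nonneg fun y _ => Complex.normSq_nonneg _) (Finset.mem_univ 0)
    have h2 : (0:ℝ) ≤ ((2:ℝ)^b)⁻¹ := by positivity
    nlinarith

theorem stmt13 (a b c d : ℕ) (hn : a + b = c + d) (hd : a < d) (γ β : ℝ) (hγ : 0 < γ)
    (H : Matrix (Fin (2^d)) (Fin (2^d)) ℂ) (hH : H.IsHermitian)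
    (hgapped : ∃ i₀, (∀ i, hH.eigenvalues i₀ ≤ hH.eigenvalues i) ∧
        ∀ i, i ≠ i₀ → hH.eigenvalues i₀ + γ ≤ hH.eigenvalues i)
    (hβ : β > (d * Real.log 2 + Real.log 3) / γ)
    (e : (Fin (2^a) × Fin (2^b)) ≃ (Fin (2^c) × Fin (2^d))) :
    ¬ ∃ U ∈ Matrix.unitaryGroup (Fin (2^c) × Fin (2^d)) ℂ,
        ptraceFst (U * (Matrix.reindex e e (inputState a b)) * Uᴴ) = gibbs β hH := by
  rintro ⟨U, hU, hEq⟩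
  obtain ⟨i₀, hmin, hgap⟩ := hgapped
  set f : ℝ → ℝ := fun x => Real.exp (-β * x) with hf
  set v : Fin (2^d) → ℂ := ⇑(hH.eigenvectorBasis i₀) with hv
  set σ : Matrix (Fin (2^c) × Fin (2^d)) (Fin (2^c) × Fin (2^d)) ℂ :=
    U * (Matrix.reindex e e (inputState a b)) * Uᴴ with hσ
  set S : ℝ := ∑ i, f (hH.eigenvalues i) with hS
  -- positivity facts
  have hβpos : 0 < β := by
    have hnum : 0 < d * Real.log 2 + Real.log 3 := by
      have h2 : 0 < Real.log 2 := Real.log_pos (by norm_num)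
      have h3 : 0 < Real.log 3 := Real.log_pos (by norm_num)
      positivity
    exact lt_trans (div_pos hnum hγ) hβ
  have hfpos : ∀ x : ℝ, 0 < f x := fun x => Real.exp_pos _
  have hSpos : 0 < S := Finset.sum_pos (fun i _ => hfpos _) Finset.univ_nonempty
  -- lower bound on ground state weight
  have hgapexp : Real.exp (-(β * γ)) < ((2:ℝ)^d * 3)⁻¹ := by
    have h1 : d * Real.log 2 + Real.log 3 < β * γ := by
      rw [gt_iff_lt, div_lt_iff₀ hγ] at hβ
      linarith
    have h2 : Real.exp (-(β * γ)) < Real.exp (-(d * Real.log 2 + Real.log 3)) :=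
      Real.exp_lt_exp.mpr (by linarith)
    have h3 : Real.exp (-(d * Real.log 2 + Real.log 3)) = ((2:ℝ)^d * 3)⁻¹ := by
      rw [neg_add, Real.exp_add, show (d : ℝ) * Real.log 2 = Real.log ((2:ℝ)^d) by
        rw [Real.log_pow], Real.exp_neg, Real.exp_neg, Real.exp_log (by positivity),
        Real.exp_log (by norm_num), mul_inv]
    linarith [h3 ▸ h2]
  have hSlt : S < f (hH.eigenvalues i₀) * (4/3) := by
    have hsplit : S = f (hH.eigenvalues i₀)
        + ∑ i ∈ Finset.univ.erase i₀, f (hH.eigenvalues i) :=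
      (Finset.add_sum_erase _ _ (Finset.mem_univ i₀)).symm
    have hterm : ∀ i ∈ Finset.univ.erase i₀,
        f (hH.eigenvalues i) ≤ f (hH.eigenvalues i₀) * Real.exp (-(β * γ)) := by
      intro i hi
      have hne := Finset.ne_of_mem_erase hi
      have := hgap i hne
      rw [hf]
      simp only
      rw [← Real.exp_add]
      apply Real.exp_le_exp.mpr
      nlinarith
    have hcard : ∑ i ∈ Finset.univ.erase i₀, f (hH.eigenvalues i)
        ≤ (2^d : ℝ) * (f (hH.eigenvalues i₀) * Real.exp (-(β * γ))) := by
      calc ∑ i ∈ Finset.univ.erase i₀, f (hH.eigenvalues i)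
          ≤ (Finset.univ.erase i₀).card • (f (hH.eigenvalues i₀) * Real.exp (-(β * γ))) :=
            Finset.sum_le_card_nsmul _ _ _ hterm
        _ = ((Finset.univ.erase i₀).card : ℝ) * (f (hH.eigenvalues i₀) * Real.exp (-(β * γ))) :=
            nsmul_eq_mul _ _
        _ ≤ (2^d : ℝ) * (f (hH.eigenvalues i₀) * Real.exp (-(β * γ))) := by
            apply mul_le_mul_of_nonneg_right _ (by positivity)
            have hcc : (Finset.univ.erase i₀).card ≤ 2^d :=
              le_trans Finset.card_erase_le (by simp)
            exact_mod_cast hcc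
    have h2d : (0:ℝ) < 2^d := by positivity
    have key2 : (2:ℝ)^d * (f (hH.eigenvalues i₀) * Real.exp (-(β * γ)))
        < f (hH.eigenvalues i₀) / 3 := by
      have hlt : (2:ℝ)^d * (f (hH.eigenvalues i₀) * Real.exp (-(β * γ)))
          < (2:ℝ)^d * (f (hH.eigenvalues i₀) * ((2:ℝ)^d * 3)⁻¹) := by
        apply mul_lt_mul_of_pos_left _ h2d
        exact mul_lt_mul_of_pos_left hgapexp (hfpos _)
      have heqq : (2:ℝ)^d * (f (hH.eigenvalues i₀) * ((2:ℝ)^d * 3)⁻¹)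
          = f (hH.eigenvalues i₀) / 3 := by
        field_simp
      linarith
    rw [hsplit]
    nlinarith [hfpos (hH.eigenvalues i₀)]
  -- the Gibbs quadratic form
  have hq : star v ⬝ᵥ (gibbs β hH *ᵥ v) = ((f (hH.eigenvalues i₀) / S : ℝ) : ℂ) := by
    have : gibbs β hH = ((hH.cfc f).trace)⁻¹ • hH.cfc f := rfl
    rw [this, Matrix.smul_mulVec, dotProduct_smul, cfc_mulVec,
      dotProduct_smul, ← hv, vdotv hH i₀, cfc_trace]
    simp only [smul_eq_mul, mul_one]
    rw [hS]
    push_cast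
    ring
  -- upper bound side
  have hσpsd : Matrix.PosSemidef (((2:ℂ)^b)⁻¹ •
      (1 : Matrix (Fin (2^c) × Fin (2^d)) (Fin (2^c) × Fin (2^d)) ℂ) - σ) := by
    have h1 : Matrix.PosSemidef (((2:ℂ)^b)⁻¹ •
        (1 : Matrix (Fin (2^c) × Fin (2^d)) (Fin (2^c) × Fin (2^d)) ℂ)
          - Matrix.reindex e e (inputState a b)) := by
      have h0 := (inputState_psd_bound a b).submatrix e.symm
      have heq2 : ((((2:ℂ)^b)⁻¹ •
          (1 : Matrix (Fin (2^a) × Fin (2^b)) (Fin (2^a) × Fin (2^b)) ℂ)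
            - inputState a b)).submatrix e.symm e.symm
          = ((2:ℂ)^b)⁻¹ • (1 : Matrix (Fin (2^c) × Fin (2^d)) (Fin (2^c) × Fin (2^d)) ℂ)
            - Matrix.reindex e e (inputState a b) := by
        ext p q
        simp [Matrix.submatrix_apply, Matrix.reindex_apply, Matrix.one_apply,
          EmbeddingLike.apply_eq_iff_eq]
      rwa [heq2] at h0
    have h2 : ((2:ℂ)^b)⁻¹ •
        (1 : Matrix (Fin (2^c) × Fin (2^d)) (Fin (2^c) × Fin (2^d)) ℂ) - σ
        = U * (((2:ℂ)^b)⁻¹ • 1 - Matrix.reindex e e (inputState a b)) * Uᴴ := by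
      have hU1 : U * Uᴴ = 1 := by
        rw [← Matrix.star_eq_conjTranspose]
        exact (Matrix.mem_unitaryGroup_iff).mp hU
      rw [Matrix.mul_sub, Matrix.sub_mul, hσ]
      congr 1
      rw [mul_smul_comm, mul_one, smul_mul_assoc, hU1]
    rw [h2]
    exact h1.mul_mul_conjTranspose_same U
  -- per-block bound
  have hwj : ∀ j : Fin (2^c),
      (star (fun p : Fin (2^c) × Fin (2^d) => if p.1 = j then v p.2 else 0) ⬝ᵥ
        (σ *ᵥ (fun p => if p.1 = j then v p.2 else 0))).re ≤ ((2:ℝ)^b)⁻¹ := by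
    intro j
    set w : Fin (2^c) × Fin (2^d) → ℂ := fun p => if p.1 = j then v p.2 else 0 with hw
    have hww : star w ⬝ᵥ w = 1 := by
      have hv1 := vdotv hH i₀
      rw [← hv] at hv1
      simp only [dotProduct, Pi.star_apply, hw] at hv1 ⊢
      rw [Fintype.sum_prod_type, Finset.sum_eq_single j]
      · simpa using hv1
      · intro k _ hk
        simp [hk]
      · simp
    have h0 := hσpsd.dotProduct_mulVec_nonneg w
    rw [Matrix.sub_mulVec, Matrix.smul_mulVec, Matrix.one_mulVec, dotProduct_sub,
      dotProduct_smul, hww, smul_eq_mul, mul_one] at h0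
    have hcast : ((2:ℂ)^b)⁻¹ = ((((2:ℝ)^b)⁻¹ : ℝ) : ℂ) := by push_cast; ring
    rw [hcast, Complex.le_def] at h0
    simp only [Complex.zero_re, Complex.sub_re, Complex.ofReal_re] at h0
    linarith [h0.1]
  -- summing the blocks
  have rhs_j : ∀ j : Fin (2^c),
      (star (fun p : Fin (2^c) × Fin (2^d) => if p.1 = j then v p.2 else 0) ⬝ᵥ
        (σ *ᵥ (fun p => if p.1 = j then v p.2 else 0)))
      = ∑ y, ∑ y', star (v y) * σ (j, y) (j, y') * v y' := by
    intro j
    simp only [dotProduct, Matrix.mulVec, Pi.star_apply,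
      apply_ite (star : ℂ → ℂ), star_zero, ite_mul, zero_mul, mul_ite, mul_zero]
    rw [Fintype.sum_prod_type, Finset.sum_eq_single j]
    · refine Finset.sum_congr rfl fun y _ => ?_
      rw [if_pos rfl, Fintype.sum_prod_type, Finset.sum_eq_single j]
      · rw [Finset.mul_sum]
        refine Finset.sum_congr rfl fun y' _ => ?_
        rw [if_pos rfl]
        ring
      · intro k _ hk
        simp [hk]
      · simp
    · intro k _ hk
      simp [hk]
    · simp
  have lhs_eq : star v ⬝ᵥ (ptraceFst σ *ᵥ v)
      = ∑ y, ∑ y', ∑ j : Fin (2^c), star (v y) * σ (j, y) (j, y') * v y' := by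
    simp only [dotProduct, Matrix.mulVec, ptraceFst, Matrix.of_apply, Pi.star_apply]
    refine Finset.sum_congr rfl fun y _ => ?_
    rw [Finset.mul_sum]
    refine Finset.sum_congr rfl fun y' _ => ?_
    rw [Finset.sum_mul, Finset.mul_sum]
    refine Finset.sum_congr rfl fun j _ => ?_
    ring
  have hsum : star v ⬝ᵥ (ptraceFst σ *ᵥ v)
      = ∑ j : Fin (2^c), star (fun p : Fin (2^c) × Fin (2^d) => if p.1 = j then v p.2 else 0) ⬝ᵥ
          (σ *ᵥ (fun p => if p.1 = j then v p.2 else 0)) := by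
    rw [lhs_eq]
    calc ∑ y, ∑ y', ∑ j : Fin (2^c), star (v y) * σ (j, y) (j, y') * v y'
        = ∑ y, ∑ j : Fin (2^c), ∑ y', star (v y) * σ (j, y) (j, y') * v y' :=
          Finset.sum_congr rfl fun y _ => Finset.sum_comm
      _ = ∑ j : Fin (2^c), ∑ y, ∑ y', star (v y) * σ (j, y) (j, y') * v y' := Finset.sum_comm
      _ = _ := Finset.sum_congr rfl fun j _ => (rhs_j j).symm
  -- upper bound
  have hup : (star v ⬝ᵥ (ptraceFst σ *ᵥ v)).re ≤ (2:ℝ)^c * ((2:ℝ)^b)⁻¹ := by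
    rw [hsum, Complex.re_sum]
    calc ∑ j : Fin (2^c), (star (fun p : Fin (2^c) × Fin (2^d) =>
            if p.1 = j then v p.2 else 0) ⬝ᵥ (σ *ᵥ (fun p => if p.1 = j then v p.2 else 0))).re
        ≤ ∑ _j : Fin (2^c), ((2:ℝ)^b)⁻¹ := Finset.sum_le_sum fun j _ => hwj j
      _ = (2:ℝ)^c * ((2:ℝ)^b)⁻¹ := by
          rw [Finset.sum_const, Finset.card_univ, Fintype.card_fin, nsmul_eq_mul]
          push_cast
          ring
  have hhalf : (2:ℝ)^c * ((2:ℝ)^b)⁻¹ ≤ 1/2 := by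
    have hbc : c + 1 ≤ b := by omega
    have h1 : (2:ℝ)^c * 2 ≤ 2^b := by
      rw [← pow_succ]
      exact pow_le_pow_right₀ (by norm_num) hbc
    have h2 : (0:ℝ) < 2^b := by positivity
    have h3 : (2:ℝ)^b * ((2:ℝ)^b)⁻¹ = 1 := mul_inv_cancel₀ (ne_of_gt h2)
    nlinarith [mul_le_mul_of_nonneg_right h1 (le_of_lt (inv_pos.mpr h2))]
  rw [hEq, hq] at hup
  simp only [Complex.ofReal_re] at hup
  have hgt : 3/4 < f (hH.eigenvalues i₀) / S := by
    rw [lt_div_iff₀ hSpos]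
    nlinarith
  linarith

end
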